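/- Let I ⊆ ℝ be a nonempty open interval, let c ∈ ℝ with c ≠ 1, and let α : I → ℝ be twice differentiable with α(t) > 0 and α'(t) ≠ 0 for all t ∈ I, satisfying α(t)·α''(t) = c·α'(t)² for all t ∈ I. Then there exist A > 0 and t₀ ∈ ℝ with t₀ ∉ I such that α(t) = A·|t − t₀|^{1/(1−c)} for all t ∈ I. -/

import Mathlib

lemma constOn_of_hasDerivAt_zero (I : Set ℝ) (hopen : IsOpen I) (hconv : Convex ℝ I)
    (f g : ℝ → ℝ) (hd : ∀ t ∈ I, HasDerivAt f (g t) t) (hg : ∀ t ∈ I, g t = 0) :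
    ∀ x ∈ I, ∀ y ∈ I, f x = f y := by
  intro x hx y hy
  apply hconv.is_const_of_fderivWithin_eq_zero (𝕜 := ℝ)
    (fun t ht => ((hd t ht).differentiableAt).differentiableWithinAt) _ hx hy
  intro t ht
  rw [fderivWithin_of_isOpen hopen ht]
  have h0 : HasDerivAt f 0 t := hg t ht ▸ hd t ht
  rw [h0.hasFDerivAt.fderiv]
  ext; simp

theorem stmt13 (I : Set ℝ) (hne : I.Nonempty) (hopen : IsOpen I)
    (hconn : I.OrdConnected)
    (c : ℝ) (hc : c ≠ 1)
    (α α' α'' : ℝ → ℝ)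
    (hd1 : ∀ t ∈ I, HasDerivAt α (α' t) t)
    (hd2 : ∀ t ∈ I, HasDerivAt α' (α'' t) t)
    (hpos : ∀ t ∈ I, 0 < α t)
    (hne0 : ∀ t ∈ I, α' t ≠ 0)
    (hODE : ∀ t ∈ I, α t * α'' t = c * α' t ^ 2) :
    ∃ A t₀ : ℝ, 0 < A ∧ t₀ ∉ I ∧ ∀ t ∈ I, α t = A * |t - t₀| ^ (1 / (1 - c)) := by
  have hconv : Convex ℝ I := hconn.convex
  have h1c : (1 : ℝ) - c ≠ 0 := sub_ne_zero.mpr (Ne.symm hc)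
  set β : ℝ → ℝ := fun t => α t ^ (1 - c) with hβ
  set β' : ℝ → ℝ := fun t => (1 - c) * α t ^ (-c) * α' t with hβ'
  -- β has derivative β'
  have hdβ : ∀ t ∈ I, HasDerivAt β (β' t) t := by
    intro t ht
    have := (hd1 t ht).rpow_const (p := 1 - c) (Or.inl (hpos t ht).ne')
    convert this using 1
    simp [hβ', sub_sub_cancel_left]
    ring
  -- β' has derivative 0
  have hdβ' : ∀ t ∈ I, HasDerivAt β' 0 t := by
    intro t ht
    have h1 : HasDerivAt (fun t => α t ^ (-c)) (-c * α t ^ (-c - 1) * α' t) t := by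
      have := (hd1 t ht).rpow_const (p := -c) (Or.inl (hpos t ht).ne')
      convert this using 1; ring
    have h2 : HasDerivAt β'
        ((1 - c) * (-c * α t ^ (-c - 1) * α' t * α' t + α t ^ (-c) * α'' t)) t := by
      have := (h1.mul (hd2 t ht)).const_mul (1 - c)
      simpa [hβ', mul_assoc] using this
    convert h2 using 1
    have hα := (hpos t ht).ne'
    have key : α t ^ (-c) = α t ^ (-c - 1) * α t := by
      rw [← Real.rpow_add_one hα (-c - 1)]; ring_nf
    have : -c * α t ^ (-c - 1) * α' t * α' t + α t ^ (-c) * α'' t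
        = α t ^ (-c - 1) * (α t * α'' t - c * α' t ^ 2) := by
      rw [key]; ring
    rw [this, hODE t ht]
    ring
  -- β' constant = m on I
  obtain ⟨s, hs⟩ := hne
  set m : ℝ := β' s with hm
  have hβ'const : ∀ t ∈ I, β' t = m :=
    fun t ht => constOn_of_hasDerivAt_zero I hopen hconv β' (fun _ => 0) hdβ' (fun _ _ => rfl) t ht s hs
  have hmne : m ≠ 0 := by
    have := hne0 s hs
    have hp : (0:ℝ) < α s ^ (-c) := Real.rpow_pos_of_pos (hpos s hs) _
    simp only [hm, hβ']
    exact mul_ne_zero (mul_ne_zero h1c hp.ne') this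
  -- β t - m*t constant
  set b : ℝ := β s - m * s with hb
  have hβeq : ∀ t ∈ I, β t = m * t + b := by
    intro t ht
    have hd : ∀ u ∈ I, HasDerivAt (fun x => β x - m * x) (β' u - m) u := by
      intro u hu
      have h2 : HasDerivAt (fun y => m * y) m u := by simpa using (hasDerivAt_id u).const_mul m
      exact (hdβ u hu).sub h2
    have := constOn_of_hasDerivAt_zero I hopen hconv (fun x => β x - m * x)
      (fun u => β' u - m) hd
      (fun u hu => show β' u - m = 0 from sub_eq_zero.mpr (hβ'const u hu)) t ht s hs
    linarith
  set t₀ : ℝ := -b / m with ht₀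
  have hβt : ∀ t ∈ I, β t = m * (t - t₀) := by
    intro t ht
    rw [hβeq t ht, ht₀]; field_simp; ring
  have hβpos : ∀ t ∈ I, 0 < β t := fun t ht => Real.rpow_pos_of_pos (hpos t ht) _
  have ht₀I : t₀ ∉ I := by
    intro h
    have := hβpos t₀ h
    rw [hβt t₀ h] at this
    simp at this
  refine ⟨|m| ^ (1 / (1 - c)), t₀, Real.rpow_pos_of_pos (abs_pos.mpr hmne) _, ht₀I, ?_⟩
  intro t ht
  have habs : β t = |m| * |t - t₀| := by
    rw [← abs_of_pos (hβpos t ht), hβt t ht, abs_mul]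
  have : α t = β t ^ (1 / (1 - c)) := by
    rw [hβ]
    simp only [one_div]
    rw [Real.rpow_rpow_inv (hpos t ht).le h1c]
  rw [this, habs, Real.mul_rpow (abs_nonneg _) (abs_nonneg _)]
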